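/- Let f : ℍ → ℍ be of class C² on an open set Ω of quaternions with nonzero imaginary part, of the form f(p) = u(p) + ι(p)·v(p) with u, v real-valued, and suppose D_l f = −2v/r on Ω. Then, writing quaternions in the form p = t + r·ι(α,β) and regarding u, v, f as functions of (t,r,α,β), the conjugate left Fueter operator applied to the real-valued function v/r satisfies D̄_l(v/r) = −(ι/r)·(∂f/∂t) + (ι/r²)·v + (1/r²)·(∂v/∂ιₗ). -/

import Mathlib

open Quaternion

noncomputable section

/-- The basis quaternion `i`. -/
def qi : ℍ[ℝ] := ⟨0,1,0,0⟩
/-- The basis quaternion `j`. -/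
def qj : ℍ[ℝ] := ⟨0,0,1,0⟩
/-- The basis quaternion `k`. -/
def qk : ℍ[ℝ] := ⟨0,0,0,1⟩

/-- Partial derivative of `f : ℍ → ℍ` in the real (`t`) direction. -/
def pt (f : ℍ[ℝ] → ℍ[ℝ]) (p : ℍ[ℝ]) : ℍ[ℝ] := fderiv ℝ f p 1
/-- Partial derivative in the `i` (`x`) direction. -/
def px (f : ℍ[ℝ] → ℍ[ℝ]) (p : ℍ[ℝ]) : ℍ[ℝ] := fderiv ℝ f p qi
/-- Partial derivative in the `j` (`y`) direction. -/
def py (f : ℍ[ℝ] → ℍ[ℝ]) (p : ℍ[ℝ]) : ℍ[ℝ] := fderiv ℝ f p qj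
/-- Partial derivative in the `k` (`z`) direction. -/
def pz (f : ℍ[ℝ] → ℍ[ℝ]) (p : ℍ[ℝ]) : ℍ[ℝ] := fderiv ℝ f p qk

/-- The left Fueter operator `D_l f = ∂f/∂t + i ∂f/∂x + j ∂f/∂y + k ∂f/∂z`. -/
def Dl (f : ℍ[ℝ] → ℍ[ℝ]) (p : ℍ[ℝ]) : ℍ[ℝ] :=
  pt f p + qi * px f p + qj * py f p + qk * pz f p
/-- The right Fueter operator `D_r f = ∂f/∂t + (∂f/∂x) i + (∂f/∂y) j + (∂f/∂z) k`. -/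
def Dr (f : ℍ[ℝ] → ℍ[ℝ]) (p : ℍ[ℝ]) : ℍ[ℝ] :=
  pt f p + px f p * qi + py f p * qj + pz f p * qk
/-- The conjugate left Fueter operator `D̄_l f = ∂f/∂t - i ∂f/∂x - j ∂f/∂y - k ∂f/∂z`. -/
def Dlbar (f : ℍ[ℝ] → ℍ[ℝ]) (p : ℍ[ℝ]) : ℍ[ℝ] :=
  pt f p - qi * px f p - qj * py f p - qk * pz f p
/-- The Laplacian `Δf = ∂²f/∂t² + ∂²f/∂x² + ∂²f/∂y² + ∂²f/∂z²`. -/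
def Lap (f : ℍ[ℝ] → ℍ[ℝ]) (p : ℍ[ℝ]) : ℍ[ℝ] :=
  pt (pt f) p + px (px f) p + py (py f) p + pz (pz f) p

/-- `r = √(x² + y² + z²)`, the norm of the imaginary part of `p`. -/
def rad (p : ℍ[ℝ]) : ℝ := Real.sqrt (p.imI^2 + p.imJ^2 + p.imK^2)
/-- `ι(p) = (x i + y j + z k)/r`, the normalized imaginary part of `p`. -/
def iot (p : ℍ[ℝ]) : ℍ[ℝ] := (rad p)⁻¹ • Quaternion.im p

/-- `ι(α,β) = cos α sin β · i + sin α sin β · j + cos β · k`, a unit imaginary quaternion. -/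
def iota (α β : ℝ) : ℍ[ℝ] :=
  ⟨0, Real.cos α * Real.sin β, Real.sin α * Real.sin β, Real.cos β⟩
/-- `ι_α = ∂ι/∂α`. -/
def iotaA (α β : ℝ) : ℍ[ℝ] := deriv (fun a => iota a β) α
/-- `ι_β = ∂ι/∂β`. -/
def iotaB (α β : ℝ) : ℍ[ℝ] := deriv (fun b => iota α b) β

/-- Partial derivative in `α` of a quaternion-valued function of `(α,β)`. -/
def pA (g : ℝ → ℝ → ℍ[ℝ]) (α β : ℝ) : ℍ[ℝ] := deriv (fun a => g a β) α
/-- Partial derivative in `β` of a quaternion-valued function of `(α,β)`. -/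
def pB (g : ℝ → ℝ → ℍ[ℝ]) (α β : ℝ) : ℍ[ℝ] := deriv (fun b => g α b) β
/-- The left angular derivative `∂g/∂ιₗ := ι_α⁻¹ (∂g/∂α) + ι_β⁻¹ (∂g/∂β)`. -/
def DI (g : ℝ → ℝ → ℍ[ℝ]) (α β : ℝ) : ℍ[ℝ] :=
  (iotaA α β)⁻¹ * pA g α β + (iotaB α β)⁻¹ * pB g α β

namespace QAux

def reC : ℍ[ℝ] →L[ℝ] ℝ := ⟨QuaternionAlgebra.reₗ _ _ _, Quaternion.continuous_re⟩
def imIC : ℍ[ℝ] →L[ℝ] ℝ := ⟨QuaternionAlgebra.imIₗ _ _ _, Quaternion.continuous_imI⟩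
def imJC : ℍ[ℝ] →L[ℝ] ℝ := ⟨QuaternionAlgebra.imJₗ _ _ _, Quaternion.continuous_imJ⟩
def imKC : ℍ[ℝ] →L[ℝ] ℝ := ⟨QuaternionAlgebra.imKₗ _ _ _, Quaternion.continuous_imK⟩
def coeC : ℝ →L[ℝ] ℍ[ℝ] := ⟨Algebra.linearMap ℝ ℍ[ℝ], Quaternion.continuous_coe⟩

@[simp] lemma reC_apply (q : ℍ[ℝ]) : reC q = q.re := rfl
@[simp] lemma imIC_apply (q : ℍ[ℝ]) : imIC q = q.imI := rfl
@[simp] lemma imJC_apply (q : ℍ[ℝ]) : imJC q = q.imJ := rfl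
@[simp] lemma imKC_apply (q : ℍ[ℝ]) : imKC q = q.imK := rfl
@[simp] lemma coeC_apply (x : ℝ) : coeC x = (x : ℍ[ℝ]) := rfl

lemma basis_decomp (d : ℍ[ℝ]) :
    d = d.re • (1:ℍ[ℝ]) + d.imI • qi + d.imJ • qj + d.imK • qk := by
  ext <;> simp <;> simp [qi, qj, qk]

lemma imsq_pos {q : ℍ[ℝ]} (h : Quaternion.im q ≠ 0) :
    0 < q.imI^2 + q.imJ^2 + q.imK^2 := by
  rcases lt_or_eq_of_le (by positivity : (0:ℝ) ≤ q.imI^2 + q.imJ^2 + q.imK^2) with h' | h'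
  · exact h'
  · exfalso; apply h
    have h1 : q.imI = 0 ∧ q.imJ = 0 ∧ q.imK = 0 := by
      constructor
      · nlinarith [sq_nonneg q.imI, sq_nonneg q.imJ, sq_nonneg q.imK, sq_abs q.imI]
      constructor
      · nlinarith [sq_nonneg q.imI, sq_nonneg q.imJ, sq_nonneg q.imK]
      · nlinarith [sq_nonneg q.imI, sq_nonneg q.imJ, sq_nonneg q.imK]
    ext <;> simp [QuaternionAlgebra.im, h1.1, h1.2.1, h1.2.2]

lemma rad_pos {q : ℍ[ℝ]} (h : Quaternion.im q ≠ 0) : 0 < rad q :=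
  Real.sqrt_pos.mpr (imsq_pos h)

lemma rad_sq {q : ℍ[ℝ]} : (rad q)^2 = q.imI^2 + q.imJ^2 + q.imK^2 :=
  Real.sq_sqrt (by positivity)

-- inverse of a purely imaginary quaternion
lemma imag_inv (q : ℍ[ℝ]) (h : q.re = 0) (hn : q.imI^2+q.imJ^2+q.imK^2 ≠ 0) :
    q⁻¹ = (-(q.imI^2+q.imJ^2+q.imK^2)⁻¹) • q := by
  apply inv_eq_of_mul_eq_one_right
  ext <;>
    simp only [Quaternion.re_mul, Quaternion.imI_mul, Quaternion.imJ_mul, Quaternion.imK_mul,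
      Quaternion.re_smul, Quaternion.imI_smul, Quaternion.imJ_smul, Quaternion.imK_smul,
      Quaternion.re_one, Quaternion.imI_one, Quaternion.imJ_one, Quaternion.imK_one,
      smul_eq_mul, h] <;>
    field_simp <;> ring

lemma mk_eq_basis (a b c d : ℝ) :
    (⟨a, b, c, d⟩ : ℍ[ℝ]) = (a : ℍ[ℝ]) + b • qi + c • qj + d • qk := by
  ext <;> simp <;> simp [qi, qj, qk]

lemma iota_eq (a b : ℝ) : iota a b =
    (Real.cos a * Real.sin b) • qi + (Real.sin a * Real.sin b) • qj + Real.cos b • qk := by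
  ext <;> simp <;> simp [iota, qi, qj, qk]

lemma hasDerivAt_iota_fst (a b : ℝ) :
    HasDerivAt (fun x => iota x b)
      ((-Real.sin a * Real.sin b) • qi + (Real.cos a * Real.sin b) • qj) a := by
  have h1 : HasDerivAt (fun x => Real.cos x * Real.sin b) (-Real.sin a * Real.sin b) a :=
    (Real.hasDerivAt_cos a).mul_const _
  have h2 : HasDerivAt (fun x => Real.sin x * Real.sin b) (Real.cos a * Real.sin b) a :=
    (Real.hasDerivAt_sin a).mul_const _
  have h := ((h1.smul_const qi).add (h2.smul_const qj)).add
    (hasDerivAt_const a (Real.cos b • qk))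
  rw [add_zero] at h
  exact h.congr_of_eventuallyEq (Filter.Eventually.of_forall fun x => (iota_eq x b))

lemma hasDerivAt_iota_snd (a b : ℝ) :
    HasDerivAt (fun y => iota a y)
      ((Real.cos a * Real.cos b) • qi + (Real.sin a * Real.cos b) • qj
        + (-Real.sin b) • qk) b := by
  have h1 : HasDerivAt (fun y => Real.cos a * Real.sin y) (Real.cos a * Real.cos b) b :=
    (Real.hasDerivAt_sin b).const_mul _
  have h2 : HasDerivAt (fun y => Real.sin a * Real.sin y) (Real.sin a * Real.cos b) b :=
    (Real.hasDerivAt_sin b).const_mul _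
  have h3 : HasDerivAt (fun y => Real.cos y) (-Real.sin b) b := Real.hasDerivAt_cos b
  have h := ((h1.smul_const qi).add (h2.smul_const qj)).add (h3.smul_const qk)
  exact h.congr_of_eventuallyEq (Filter.Eventually.of_forall fun y => (iota_eq a y))

lemma iotaA_eq (a b : ℝ) :
    iotaA a b = (-Real.sin a * Real.sin b) • qi + (Real.cos a * Real.sin b) • qj :=
  (hasDerivAt_iota_fst a b).deriv

lemma iotaB_eq (a b : ℝ) :
    iotaB a b = (Real.cos a * Real.cos b) • qi + (Real.sin a * Real.cos b) • qj
      + (-Real.sin b) • qk :=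
  (hasDerivAt_iota_snd a b).deriv

def uf (f : ℍ[ℝ] → ℍ[ℝ]) (q : ℍ[ℝ]) : ℝ := (f q).re
def wf (f : ℍ[ℝ] → ℍ[ℝ]) (q : ℍ[ℝ]) : ℝ :=
  ((f q).imI * q.imI + (f q).imJ * q.imJ + (f q).imK * q.imK)
    / (q.imI^2 + q.imJ^2 + q.imK^2)

lemma diff_uf {f : ℍ[ℝ] → ℍ[ℝ]} {p : ℍ[ℝ]} (hf : DifferentiableAt ℝ f p) :
    DifferentiableAt ℝ (uf f) p :=
  (reC.differentiableAt).comp p hf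

lemma diff_wf {f : ℍ[ℝ] → ℍ[ℝ]} {p : ℍ[ℝ]} (hf : DifferentiableAt ℝ f p)
    (hp : Quaternion.im p ≠ 0) : DifferentiableAt ℝ (wf f) p := by
  have hd : (p.imI^2 + p.imJ^2 + p.imK^2) ≠ 0 := ne_of_gt (imsq_pos hp)
  have hI : DifferentiableAt ℝ (fun q : ℍ[ℝ] => (f q).imI) p := imIC.differentiableAt.comp p hf
  have hJ : DifferentiableAt ℝ (fun q : ℍ[ℝ] => (f q).imJ) p := imJC.differentiableAt.comp p hf
  have hK : DifferentiableAt ℝ (fun q : ℍ[ℝ] => (f q).imK) p := imKC.differentiableAt.comp p hf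
  have hqI : DifferentiableAt ℝ (fun q : ℍ[ℝ] => q.imI) p := imIC.differentiableAt
  have hqJ : DifferentiableAt ℝ (fun q : ℍ[ℝ] => q.imJ) p := imJC.differentiableAt
  have hqK : DifferentiableAt ℝ (fun q : ℍ[ℝ] => q.imK) p := imKC.differentiableAt
  have top : DifferentiableAt ℝ
      (fun q : ℍ[ℝ] => (f q).imI * q.imI + (f q).imJ * q.imJ + (f q).imK * q.imK) p :=
    ((hI.mul hqI).add (hJ.mul hqJ)).add (hK.mul hqK)
  have bot : DifferentiableAt ℝ (fun q : ℍ[ℝ] => q.imI^2 + q.imJ^2 + q.imK^2) p :=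
    ((hqI.pow 2).add (hqJ.pow 2)).add (hqK.pow 2)
  have : DifferentiableAt ℝ (fun q : ℍ[ℝ] =>
      ((f q).imI * q.imI + (f q).imJ * q.imJ + (f q).imK * q.imK)
        * (q.imI^2 + q.imJ^2 + q.imK^2)⁻¹) p := top.mul (bot.inv hd)
  unfold wf; simp only [div_eq_mul_inv]; exact this

lemma rad_form (t r a b : ℝ) (hr : 0 < r) : rad ((t:ℍ[ℝ]) + r • iota a b) = r := by
  have hI : ((t:ℍ[ℝ]) + r • iota a b).imI = r * (Real.cos a * Real.sin b) := by
    simp only [Quaternion.imI_add, Quaternion.imI_coe, Quaternion.imI_smul]; simp [iota]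
  have hJ : ((t:ℍ[ℝ]) + r • iota a b).imJ = r * (Real.sin a * Real.sin b) := by
    simp only [Quaternion.imJ_add, Quaternion.imJ_coe, Quaternion.imJ_smul]; simp [iota]
  have hK : ((t:ℍ[ℝ]) + r • iota a b).imK = r * Real.cos b := by
    simp only [Quaternion.imK_add, Quaternion.imK_coe, Quaternion.imK_smul]; simp [iota]
  rw [rad, hI, hJ, hK]
  have h1 : (r * (Real.cos a * Real.sin b))^2 + (r * (Real.sin a * Real.sin b))^2
      + (r * Real.cos b)^2 = r^2 := by
    have pa := Real.sin_sq_add_cos_sq a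
    have pb := Real.sin_sq_add_cos_sq b
    linear_combination r^2 * Real.sin b ^ 2 * pa + r^2 * pb
  rw [h1, Real.sqrt_sq hr.le]

lemma form_all {Ω : Set ℍ[ℝ]} (hΩim : ∀ p ∈ Ω, Quaternion.im p ≠ 0)
    {f : ℍ[ℝ] → ℍ[ℝ]} {u v : ℍ[ℝ] → ℝ}
    (hform : ∀ p ∈ Ω, f p = (u p : ℍ[ℝ]) + iot p * (v p : ℍ[ℝ]))
    {q : ℍ[ℝ]} (hq : q ∈ Ω) :
    uf f q = u q ∧ wf f q = v q / rad q ∧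
      f q = ((uf f q : ℝ) : ℍ[ℝ]) + wf f q • (q - ((q.re : ℝ) : ℍ[ℝ])) := by
  have him := hΩim q hq
  have hS : (0:ℝ) < q.imI^2 + q.imJ^2 + q.imK^2 := imsq_pos him
  have hr0 : rad q ≠ 0 := (rad_pos him).ne'
  have hfq := hform q hq
  have h2 : iot q * ((v q : ℝ) : ℍ[ℝ]) = (v q * (rad q)⁻¹) • Quaternion.im q := by
    rw [mul_coe_eq_smul, iot, smul_smul, mul_comm]
  have hre : (f q).re = u q := by rw [hfq, h2]; simp
  have hI : (f q).imI = v q * (rad q)⁻¹ * q.imI := by rw [hfq, h2]; simp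
  have hJ : (f q).imJ = v q * (rad q)⁻¹ * q.imJ := by rw [hfq, h2]; simp
  have hK : (f q).imK = v q * (rad q)⁻¹ * q.imK := by rw [hfq, h2]; simp
  have hu : uf f q = u q := hre
  have hradsq := (rad_sq (q := q))
  have hw : wf f q = v q / rad q := by
    rw [wf, hI, hJ, hK]
    have key : v q * (rad q)⁻¹ * q.imI * q.imI + v q * (rad q)⁻¹ * q.imJ * q.imJ
        + v q * (rad q)⁻¹ * q.imK * q.imK
        = (v q / rad q) * (q.imI^2 + q.imJ^2 + q.imK^2) := by
      field_simp
    rw [key, mul_div_assoc, div_self hS.ne', mul_one]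
  refine ⟨hu, hw, ?_⟩
  rw [hfq, h2, hu, hw, Quaternion.sub_re_self, div_eq_mul_inv]

lemma imsq_form (t r a b : ℝ) (hr : 0 < r) :
    Quaternion.im ((t:ℍ[ℝ]) + r • iota a b) = r • iota a b := by
  ext <;> simp only [Quaternion.re_im, Quaternion.imI_im, Quaternion.imJ_im, Quaternion.imK_im,
    Quaternion.re_smul, Quaternion.imI_smul, Quaternion.imJ_smul, Quaternion.imK_smul, Quaternion.imI_add,
    Quaternion.imJ_add, Quaternion.imK_add, Quaternion.imI_coe, Quaternion.imJ_coe, Quaternion.imK_coe] <;>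
    simp [iota]

end QAux

open QAux Topology

set_option maxHeartbeats 1000000


/-- If `f` is `C²` on an open set `Ω` of quaternions with nonzero imaginary
part, of the form `f = u + ι v` with `u, v` real-valued, and `D_l f = -2v/r` on `Ω`, then at
`p = t + r ι(α,β) ∈ Ω` the conjugate left Fueter operator applied to `v/r` satisfies
`D̄_l(v/r) = -(ι/r) ∂f/∂t + (ι/r²) v + (1/r²) ∂v/∂ιₗ`. -/
theorem conjugate_fueter_of_v_over_r (Ω : Set ℍ[ℝ]) (hΩ : IsOpen Ω)
    (hΩim : ∀ p ∈ Ω, Quaternion.im p ≠ 0)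
    (f : ℍ[ℝ] → ℍ[ℝ]) (hf : ContDiffOn ℝ 2 f Ω)
    (u v : ℍ[ℝ] → ℝ)
    (hform : ∀ p ∈ Ω, f p = (u p : ℍ[ℝ]) + iot p * (v p : ℍ[ℝ]))
    (hDl : ∀ p ∈ Ω, Dl f p = ((-2 * v p / rad p : ℝ) : ℍ[ℝ]))
    (t r α β : ℝ) (hr : 0 < r) (hβ : Real.sin β ≠ 0)
    (p : ℍ[ℝ]) (hpdef : p = (t : ℍ[ℝ]) + r • iota α β) (hp : p ∈ Ω)
    (V : ℝ → ℝ → ℍ[ℝ])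
    (hV : ∀ a b, V a b = ((v ((t : ℍ[ℝ]) + r • iota a b) : ℝ) : ℍ[ℝ])) :
    Dlbar (fun q => ((v q / rad q : ℝ) : ℍ[ℝ])) p
      = -((r⁻¹ • iota α β) * pt f p)
        + (((r^2)⁻¹ : ℝ) • iota α β) * (v p : ℍ[ℝ])
        + ((r^2)⁻¹ : ℝ) • DI V α β := by
  classical
  have hpmem : Ω ∈ 𝓝 p := hΩ.mem_nhds hp
  have him : Quaternion.im p ≠ 0 := hΩim p hp
  have hfd : DifferentiableAt ℝ f p :=
    (hf.contDiffAt hpmem).differentiableAt (by norm_num)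
  have hu := diff_uf hfd
  have hw := diff_wf hfd him
  set U := fderiv ℝ (uf f) p with hUdef
  set W := fderiv ℝ (wf f) p with hWdef
  have hrad : rad p = r := by rw [hpdef]; exact rad_form t r α β hr
  have hvp : v p = r * wf f p := by
    have h := (form_all hΩim hform hp).2.1
    rw [hrad] at h
    rw [h]
    field_simp
  have hpI : p.imI = r * (Real.cos α * Real.sin β) := by
    rw [hpdef]; simp only [Quaternion.imI_add, Quaternion.imI_coe, Quaternion.imI_smul]; simp [iota]
  have hpJ : p.imJ = r * (Real.sin α * Real.sin β) := by
    rw [hpdef]; simp only [Quaternion.imJ_add, Quaternion.imJ_coe, Quaternion.imJ_smul]; simp [iota]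
  have hpK : p.imK = r * Real.cos β := by
    rw [hpdef]; simp only [Quaternion.imK_add, Quaternion.imK_coe, Quaternion.imK_smul]; simp [iota]
  have hfeq : f =ᶠ[𝓝 p]
      (fun q => ((uf f q : ℝ):ℍ[ℝ]) + wf f q • (q - ((q.re : ℝ):ℍ[ℝ]))) := by
    filter_upwards [hpmem] with q hq
    exact (form_all hΩim hform hq).2.2
  have himC : HasFDerivAt (fun q : ℍ[ℝ] => q - ((q.re : ℝ):ℍ[ℝ]))
      (ContinuousLinearMap.id ℝ ℍ[ℝ] - coeC.comp reC) p :=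
    (hasFDerivAt_id p).sub (coeC.hasFDerivAt.comp p reC.hasFDerivAt)
  have hF0 : HasFDerivAt
      (fun q => ((uf f q : ℝ):ℍ[ℝ]) + wf f q • (q - ((q.re : ℝ):ℍ[ℝ])))
      (coeC.comp U + (wf f p • (ContinuousLinearMap.id ℝ ℍ[ℝ] - coeC.comp reC)
        + W.smulRight (p - ((p.re : ℝ):ℍ[ℝ])))) p :=
    (coeC.hasFDerivAt.comp p hu.hasFDerivAt).add (hw.hasFDerivAt.smul himC)
  have hF : HasFDerivAt f
      (coeC.comp U + (wf f p • (ContinuousLinearMap.id ℝ ℍ[ℝ] - coeC.comp reC)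
        + W.smulRight (p - ((p.re : ℝ):ℍ[ℝ])))) p :=
    hF0.congr_of_eventuallyEq hfeq
  have hfdv : ∀ d, fderiv ℝ f p d
      = ((U d : ℝ):ℍ[ℝ]) + ((W d) • Quaternion.im p + wf f p • (d - ((d.re : ℝ):ℍ[ℝ]))) := by
    intro d
    rw [hF.fderiv]
    have : p - ((p.re : ℝ):ℍ[ℝ]) = Quaternion.im p := Quaternion.sub_re_self p
    simp [this, ContinuousLinearMap.add_apply, ContinuousLinearMap.smul_apply,
      ContinuousLinearMap.smulRight_apply, ContinuousLinearMap.comp_apply]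
    abel
  have hgeq : (fun q => ((v q / rad q : ℝ):ℍ[ℝ])) =ᶠ[𝓝 p]
      (fun q => ((wf f q : ℝ):ℍ[ℝ])) := by
    filter_upwards [hpmem] with q hq
    rw [(form_all hΩim hform hq).2.1]
  have hgF : HasFDerivAt (fun q => ((wf f q : ℝ):ℍ[ℝ])) (coeC.comp W) p :=
    coeC.hasFDerivAt.comp p hw.hasFDerivAt
  have hgF' : HasFDerivAt (fun q => ((v q / rad q : ℝ):ℍ[ℝ])) (coeC.comp W) p :=
    hgF.congr_of_eventuallyEq hgeq
  have hLd : ∀ d, fderiv ℝ (fun q => ((v q / rad q : ℝ):ℍ[ℝ])) p d = ((W d : ℝ):ℍ[ℝ]) := by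
    intro d; rw [hgF'.fderiv]; rfl

  have hWdec : ∀ d : ℍ[ℝ], W d = d.re * W 1 + d.imI * W qi + d.imJ * W qj + d.imK * W qk := by
    intro d
    conv_lhs => rw [basis_decomp d]
    simp [smul_eq_mul]
  have hU1 : U 1 = W qi * p.imI + W qj * p.imJ + W qk * p.imK + wf f p := by
    have h := hDl p hp
    have hre := congrArg QuaternionAlgebra.re h
    rw [Dl, pt, px, py, pz, hfdv 1, hfdv qi, hfdv qj, hfdv qk] at hre
    simp [Quaternion.re_mul, hrad, hvp] at hre; simp [qi, qj, qk] at hre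
    have e1 : ({ re := 0, imI := 1, imJ := 0, imK := 0 } : ℍ[ℝ]) = qi := rfl
    have e2 : ({ re := 0, imI := 0, imJ := 1, imK := 0 } : ℍ[ℝ]) = qj := rfl
    have e3 : ({ re := 0, imI := 0, imJ := 0, imK := 1 } : ℍ[ℝ]) = qk := rfl
    rw [e1, e2, e3] at hre
    have hcast : ((-(2 * (r * wf f p)) / r : ℝ) : ℍ[ℝ]).re = -(2 * (r * wf f p)) / r := by
      norm_cast
    rw [show ((-(↑(2:ℝ) * ((r:ℍ[ℝ]) * ↑(wf f p))) / (r:ℍ[ℝ]))) = ((-(2 * (r * wf f p)) / r : ℝ) : ℍ[ℝ]) by push_cast; ring] at hre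
    rw [hcast] at hre
    have hrne : r ≠ 0 := hr.ne'
    field_simp at hre
    have key : (U 1 - (W qi * p.imI + W qj * p.imJ + W qk * p.imK + wf f p)) * r = 0 := by
      linear_combination r * hre
    rcases mul_eq_zero.mp key with h' | h'
    · linarith
    · exact absurd h' hrne

  have hcontA : Continuous (fun a : ℝ => ((t:ℍ[ℝ]) + r • iota a β)) := by
    have hiotacont : Continuous fun a : ℝ => iota a β := by
      have : (fun a : ℝ => iota a β) = fun a : ℝ =>
          (Real.cos a * Real.sin β) • qi + (Real.sin a * Real.sin β) • qj
            + Real.cos β • qk := funext fun a => iota_eq a β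
      rw [this]
      exact (((Real.continuous_cos.mul continuous_const).smul continuous_const).add
        ((Real.continuous_sin.mul continuous_const).smul continuous_const)).add
        continuous_const
    exact continuous_const.add (hiotacont.const_smul r)
  have hcontB : Continuous (fun b : ℝ => ((t:ℍ[ℝ]) + r • iota α b)) := by
    have hiotacont : Continuous fun b : ℝ => iota α b := by
      have : (fun b : ℝ => iota α b) = fun b : ℝ =>
          (Real.cos α * Real.sin b) • qi + (Real.sin α * Real.sin b) • qj
            + Real.cos b • qk := funext fun b => iota_eq α b
      rw [this]
      exact (((continuous_const.mul Real.continuous_sin).smul continuous_const).add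
        ((continuous_const.mul Real.continuous_sin).smul continuous_const)).add
        (Real.continuous_cos.smul continuous_const)
    exact continuous_const.add (hiotacont.const_smul r)
  have hΩnhds : Ω ∈ 𝓝 ((t:ℍ[ℝ]) + r • iota α β) := hΩ.mem_nhds (hpdef ▸ hp)
  have hmemA : ∀ᶠ a in 𝓝 α, ((t:ℍ[ℝ]) + r • iota a β) ∈ Ω :=
    hcontA.continuousAt.preimage_mem_nhds hΩnhds
  have hmemB : ∀ᶠ b in 𝓝 β, ((t:ℍ[ℝ]) + r • iota α b) ∈ Ω :=
    hcontB.continuousAt.preimage_mem_nhds hΩnhds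
  have hVeqA : (fun a => V a β) =ᶠ[𝓝 α]
      (fun a => ((r * wf f ((t:ℍ[ℝ]) + r • iota a β) : ℝ) : ℍ[ℝ])) := by
    filter_upwards [hmemA] with a ha
    rw [hV a β]
    congr 1
    rw [(form_all hΩim hform ha).2.1, rad_form t r a β hr]
    field_simp
  have hVeqB : (fun b => V α b) =ᶠ[𝓝 β]
      (fun b => ((r * wf f ((t:ℍ[ℝ]) + r • iota α b) : ℝ) : ℍ[ℝ])) := by
    filter_upwards [hmemB] with b hb
    rw [hV α b]
    congr 1
    rw [(form_all hΩim hform hb).2.1, rad_form t r α b hr]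
    field_simp
  have hwFp : HasFDerivAt (wf f) W ((t:ℍ[ℝ]) + r • iota α β) := by
    rw [← hpdef]; exact hw.hasFDerivAt
  have hcurveA : HasDerivAt (fun a => ((t:ℍ[ℝ]) + r • iota a β))
      (r • ((-Real.sin α * Real.sin β) • qi + (Real.cos α * Real.sin β) • qj)) α :=
    ((hasDerivAt_iota_fst α β).const_smul r).const_add _
  have hcurveB : HasDerivAt (fun b => ((t:ℍ[ℝ]) + r • iota α b))
      (r • ((Real.cos α * Real.cos β) • qi + (Real.sin α * Real.cos β) • qj
        + (-Real.sin β) • qk)) β :=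
    ((hasDerivAt_iota_snd α β).const_smul r).const_add _
  have hwA : HasDerivAt (fun a => wf f ((t:ℍ[ℝ]) + r • iota a β))
      (W (r • ((-Real.sin α * Real.sin β) • qi + (Real.cos α * Real.sin β) • qj))) α :=
    hwFp.comp_hasDerivAt (f := fun a => (t:ℍ[ℝ]) + r • iota a β) α hcurveA
  have hwB : HasDerivAt (fun b => wf f ((t:ℍ[ℝ]) + r • iota α b))
      (W (r • ((Real.cos α * Real.cos β) • qi + (Real.sin α * Real.cos β) • qj
        + (-Real.sin β) • qk))) β :=
    hwFp.comp_hasDerivAt (f := fun b => (t:ℍ[ℝ]) + r • iota α b) β hcurveB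
  have hpAeq : pA V α β = ((r * W (r • ((-Real.sin α * Real.sin β) • qi
      + (Real.cos α * Real.sin β) • qj)) : ℝ) : ℍ[ℝ]) := by
    rw [pA, hVeqA.deriv_eq]
    exact (coeC.hasFDerivAt.comp_hasDerivAt α (hwA.const_mul r)).deriv
  have hpBeq : pB V α β = ((r * W (r • ((Real.cos α * Real.cos β) • qi
      + (Real.sin α * Real.cos β) • qj + (-Real.sin β) • qk)) : ℝ) : ℍ[ℝ]) := by
    rw [pB, hVeqB.deriv_eq]
    exact (coeC.hasFDerivAt.comp_hasDerivAt β (hwB.const_mul r)).deriv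

  have hWA : W (r • ((-Real.sin α * Real.sin β) • qi + (Real.cos α * Real.sin β) • qj))
      = r * (-Real.sin α * Real.sin β * W qi + Real.cos α * Real.sin β * W qj) := by
    rw [map_smul, map_add, map_smul, map_smul]
    simp [smul_eq_mul]
  have hWB : W (r • ((Real.cos α * Real.cos β) • qi + (Real.sin α * Real.cos β) • qj
      + (-Real.sin β) • qk))
      = r * (Real.cos α * Real.cos β * W qi + Real.sin α * Real.cos β * W qj
        + (-Real.sin β) * W qk) := by
    rw [map_smul, map_add, map_add, map_smul, map_smul, map_smul]
    simp [smul_eq_mul]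
  have hiAmk : iotaA α β
      = (⟨0, -(Real.sin α * Real.sin β), Real.cos α * Real.sin β, 0⟩ : ℍ[ℝ]) := by
    rw [iotaA_eq]
    ext <;> simp <;> simp [qi, qj]
  have hiBmk : iotaB α β
      = (⟨0, Real.cos α * Real.cos β, Real.sin α * Real.cos β, -Real.sin β⟩ : ℍ[ℝ]) := by
    rw [iotaB_eq]
    ext <;> simp <;> simp [qi, qj, qk]
  have hsumA : (-(Real.sin α * Real.sin β))^2 + (Real.cos α * Real.sin β)^2 + (0:ℝ)^2
      = Real.sin β ^ 2 := by
    linear_combination (Real.sin β)^2 * (Real.sin_sq_add_cos_sq α)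
  have hSA : (-(Real.sin α * Real.sin β))^2 + (Real.cos α * Real.sin β)^2 + (0:ℝ)^2 ≠ 0 := by
    rw [hsumA]; exact pow_ne_zero 2 hβ
  have hsumB : (Real.cos α * Real.cos β)^2 + (Real.sin α * Real.cos β)^2 + (-Real.sin β)^2
      = 1 := by
    linear_combination (Real.cos β)^2 * (Real.sin_sq_add_cos_sq α) + Real.sin_sq_add_cos_sq β
  have hSB : (Real.cos α * Real.cos β)^2 + (Real.sin α * Real.cos β)^2 + (-Real.sin β)^2
      ≠ 0 := by
    rw [hsumB]; exact one_ne_zero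
  have hiAinv : (iotaA α β)⁻¹
      = (-(((-(Real.sin α * Real.sin β))^2 + (Real.cos α * Real.sin β)^2 + (0:ℝ)^2))⁻¹)
        • (⟨0, -(Real.sin α * Real.sin β), Real.cos α * Real.sin β, 0⟩ : ℍ[ℝ]) := by
    rw [hiAmk]; exact imag_inv _ rfl hSA
  rw [hsumA] at hiAinv
  have hiBinv : (iotaB α β)⁻¹
      = (-(((Real.cos α * Real.cos β)^2 + (Real.sin α * Real.cos β)^2 + (-Real.sin β)^2))⁻¹)
        • (⟨0, Real.cos α * Real.cos β, Real.sin α * Real.cos β, -Real.sin β⟩ : ℍ[ℝ]) := by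
    rw [hiBmk]; exact imag_inv _ rfl hSB
  rw [hsumB] at hiBinv
  have himp : Quaternion.im p = (⟨0, r * (Real.cos α * Real.sin β),
      r * (Real.sin α * Real.sin β), r * Real.cos β⟩ : ℍ[ℝ]) := by
    ext <;> simp [hpI, hpJ, hpK]
  simp only [Dlbar, pt, px, py, pz, DI]
  rw [hLd 1, hLd qi, hLd qj, hLd qk, hfdv 1, hpAeq, hpBeq, hiAinv, hiBinv, hWA, hWB,
    hU1, hvp, hpI, hpJ, hpK, himp]
  have hone : (1:ℍ[ℝ]) - ((QuaternionAlgebra.re (1:ℍ[ℝ]) : ℝ) : ℍ[ℝ]) = 0 := by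
    simp
  rw [hone, smul_zero, add_zero]
  have pa := Real.sin_sq_add_cos_sq α
  have pb := Real.sin_sq_add_cos_sq β
  generalize W 1 = s0
  generalize W qi = a0
  generalize W qj = b0
  generalize W qk = c0
  generalize wf f p = w0
  simp only [QuaternionAlgebra.smul_mk]
  simp only [mk_eq_basis]
  ext <;>
    simp only [Quaternion.re_mul, Quaternion.imI_mul, Quaternion.imJ_mul,
      Quaternion.imK_mul, Quaternion.re_add, Quaternion.imI_add, Quaternion.imJ_add,
      Quaternion.imK_add, Quaternion.re_sub, Quaternion.imI_sub, Quaternion.imJ_sub,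
      Quaternion.imK_sub, Quaternion.re_neg, Quaternion.imI_neg, Quaternion.imJ_neg,
      Quaternion.imK_neg, Quaternion.re_smul, Quaternion.imI_smul, Quaternion.imJ_smul,
      Quaternion.imK_smul, Quaternion.re_coe, Quaternion.imI_coe, Quaternion.imJ_coe,
      Quaternion.imK_coe, Quaternion.re_one, Quaternion.imI_one, Quaternion.imJ_one,
      Quaternion.imK_one, smul_eq_mul] <;> simp only [qi, qj, qk, iota] <;> (try norm_num) <;> field_simp <;> ring_nf
  · linear_combination (-(s0*Real.sin β^2)) * pa - s0 * pb
  · linear_combination (a0*r) * pa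
      + (a0*r*Real.cos α^2 + r*Real.sin α*Real.cos α*b0) * pb
  · linear_combination (b0*r) * pa
      + (b0*r*Real.sin α^2 + r*Real.sin α*Real.cos α*a0) * pb
  · linear_combination (c0*r) * pb
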